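/- In the standing setup, a_0σ_2^o = −(1/3)[(−32λ + 19/16)σ_1 − (7/32)σ_2^e + (32λ² − 5λ + (1/8)μ + 127/1024)a_0 + (−(1/2)λ + 19/1024)(a_1 + a_{−1}) − (7/2048)(a_2 + a_{−2})]. -/

import Mathlib

/-- The `l`-eigenspace of the adjoint map `x ↦ a * x` of an element `a` of a commutative
nonassociative algebra. -/
def eig (k : Type*) {A : Type*} [Field k] [NonUnitalNonAssocCommRing A]
    [Module k A] [SMulCommClass k A A] [IsScalarTower k A A] (a : A) (l : k) :
    Submodule k A :=
  Module.End.eigenspace (LinearMap.mul k A a) l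

/-- `a` is a `V(4,3)`-axis: an idempotent which is semisimple with spectrum in
`{1, 0, 1/4, 1/32}`, primitive, and whose eigenspaces satisfy the Ising fusion rules. -/
def IsV43Axis (k : Type*) {A : Type*} [Field k] [NonUnitalNonAssocCommRing A]
    [Module k A] [SMulCommClass k A A] [IsScalarTower k A A] (a : A) : Prop :=
  a * a = a ∧
  (eig k a 1 ⊔ eig k a 0 ⊔ eig k a (1/4) ⊔ eig k a (1/32)) = ⊤ ∧
  eig k a 1 = Submodule.span k ({a} : Set A) ∧
  (∀ x ∈ eig k a 0, ∀ y ∈ eig k a 0, x * y ∈ eig k a 0) ∧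
  (∀ x ∈ eig k a 0, ∀ y ∈ eig k a (1/4), x * y ∈ eig k a (1/4)) ∧
  (∀ x ∈ eig k a 0, ∀ y ∈ eig k a (1/32), x * y ∈ eig k a (1/32)) ∧
  (∀ x ∈ eig k a (1/4), ∀ y ∈ eig k a (1/4), x * y ∈ eig k a 1 ⊔ eig k a 0) ∧
  (∀ x ∈ eig k a (1/4), ∀ y ∈ eig k a (1/32), x * y ∈ eig k a (1/32)) ∧
  (∀ x ∈ eig k a (1/32), ∀ y ∈ eig k a (1/32),
      x * y ∈ eig k a 1 ⊔ eig k a 0 ⊔ eig k a (1/4))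

/-- The doubly infinite sequence of axes `a_j`, `j ∈ ℤ`, with `a_{2i} = ρ^i(a_0)` and
`a_{2i+1} = ρ^i(a_1)`, where `ρ = τ1 ∘ τ0`. -/
def aSeq {k : Type*} {A : Type*} [Field k] [NonUnitalNonAssocCommRing A]
    [Module k A] [SMulCommClass k A A] [IsScalarTower k A A]
    (τ0 τ1 : A ≃ₗ[k] A) (a0 a1 : A) (j : ℤ) : A :=
  if Even j then ((τ0.trans τ1) ^ (j / 2)) a0 else ((τ0.trans τ1) ^ ((j - 1) / 2)) a1

theorem a0_mul_sigma2o
    {k : Type*} [Field k] [CharZero k] {A : Type*} [NonUnitalNonAssocCommRing A]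
    [Module k A] [SMulCommClass k A A] [IsScalarTower k A A]
    (B : LinearMap.BilinForm k A)
    (hsymm : ∀ x y : A, B x y = B y x)
    (hassoc : ∀ x y z : A, B (x * y) z = B x (y * z))
    (a0 a1 : A) (ha0 : IsV43Axis k a0) (ha1 : IsV43Axis k a1)
    (hn0 : B a0 a0 = 1) (hn1 : B a1 a1 = 1)
    (τ0 τ1 : A ≃ₗ[k] A)
    (hτ0p : ∀ x ∈ eig k a0 1 ⊔ eig k a0 0 ⊔ eig k a0 (1/4), τ0 x = x)
    (hτ0m : ∀ x ∈ eig k a0 (1/32), τ0 x = -x)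
    (hτ1p : ∀ x ∈ eig k a1 1 ⊔ eig k a1 0 ⊔ eig k a1 (1/4), τ1 x = x)
    (hτ1m : ∀ x ∈ eig k a1 (1/32), τ1 x = -x)
    (hτ0mul : ∀ x y : A, τ0 (x * y) = τ0 x * τ0 y)
    (hτ1mul : ∀ x y : A, τ1 (x * y) = τ1 x * τ1 y)
    (hτ0B : ∀ x y : A, B (τ0 x) (τ0 y) = B x y)
    (hτ1B : ∀ x y : A, B (τ1 x) (τ1 y) = B x y)
    (a : ℤ → A) (ha : a = aSeq τ0 τ1 a0 a1)
    (lm mu : k) (hlm : lm = B a0 a1) (hmu : mu = B a0 (a 2))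
    (σ1 σ2e σ2o : A)
    (hσ1 : σ1 = a0 * a1 - (1/32 : k) • (a0 + a1))
    (hσ2e : σ2e = a0 * a 2 - (1/32 : k) • (a0 + a 2))
    (hσ2o : σ2o = a (-1) * a1 - (1/32 : k) • (a (-1) + a1)) :
    a0 * σ2o =
      -((1/3 : k) • ((-32 * lm + 19/16) • σ1 - (7/32 : k) • σ2e +
        (32 * lm ^ 2 - 5 * lm + (1/8 : k) * mu + 127/1024) • a0 +
        (-((1/2 : k) * lm) + 19/1024) • (a 1 + a (-1)) - (7/2048 : k) • (a 2 + a (-2)))) := by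


  -- destructure the two axis hypotheses
  obtain ⟨hid0, hsup0, hspan0, f00, f02, f05, f22, f25, f55⟩ := ha0
  obtain ⟨hid1, hsup1, hspan1, g00, g02, g05, g22, g25, g55⟩ := ha1
  -- eigenvector criterion
  have heig : ∀ (b x : A) (ν : k), x ∈ eig k b ν ↔ b * x = ν • x := by
    intro b x ν
    rw [eig, Module.End.mem_eigenspace_iff, LinearMap.mul_apply']
  -- decompose a1 with respect to a0
  have hmem : a1 ∈ eig k a0 1 ⊔ eig k a0 0 ⊔ eig k a0 (1/4) ⊔ eig k a0 (1/32) := by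
    rw [hsup0]; exact Submodule.mem_top
  obtain ⟨p3, hp3m, w, hw, hs3⟩ := Submodule.mem_sup.1 hmem
  obtain ⟨q2, hq2m, v, hv, hs2⟩ := Submodule.mem_sup.1 hp3m
  obtain ⟨y1, hy1, u, hu, hs1⟩ := Submodule.mem_sup.1 hq2m
  rw [hspan0] at hy1
  obtain ⟨c, rfl⟩ := Submodule.mem_span_singleton.1 hy1
  -- eigenvalue equations for u, v, w
  have h0u : a0 * u = 0 := by have := (heig a0 u 0).1 hu; rwa [zero_smul] at this
  have h0v : a0 * v = (1/4:k) • v := (heig a0 v (1/4)).1 hv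
  have h0w : a0 * w = (1/32:k) • w := (heig a0 w (1/32)).1 hw
  -- orthogonality of a0 with eigenvectors for eigenvalues ≠ 1
  have horth : ∀ (x : A) (ν : k), a0 * x = ν • x → ν ≠ 1 → B a0 x = 0 := by
    intro x ν hx hν
    have h1 : B (a0 * a0) x = B a0 (a0 * x) := hassoc a0 a0 x
    rw [hid0, hx, map_smul, smul_eq_mul] at h1
    have h2 : (1 - ν) * B a0 x = 0 := by linear_combination h1
    rcases mul_eq_zero.1 h2 with h | h
    · exact absurd (by linear_combination h) hν.symm
    · exact h
  have hBu : B a0 u = 0 := horth u 0 (by rw [h0u, zero_smul]) (by norm_num)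
  have hBv : B a0 v = 0 := horth v (1/4) h0v (by norm_num)
  have hBw : B a0 w = 0 := horth w (1/32) h0w (by norm_num)
  -- the coefficient c equals lm
  have hceq : lm = c := by
    have h : B a0 (c • a0 + u + v + w) = B a0 a1 := by rw [hs1, hs2, hs3]
    simp only [map_add, map_smul, hBu, hBv, hBw, hn0, smul_eq_mul, mul_one, add_zero] at h
    rw [hlm, h]
  subst hceq
  have ha1c : a1 = lm • a0 + u + v + w := by rw [hs1, hs2, hs3]
  -- fusion products
  obtain ⟨s1, hs1m, nv, hnv, hvv0⟩ := Submodule.mem_sup.1 (f22 v hv v hv)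
  rw [hspan0] at hs1m
  obtain ⟨cv, rfl⟩ := Submodule.mem_span_singleton.1 hs1m
  have hvv : v * v = cv • a0 + nv := hvv0.symm
  obtain ⟨t2, ht2m, mw, hmw, hww0⟩ := Submodule.mem_sup.1 (f55 w hw w hw)
  obtain ⟨t1, ht1m, nw, hnw, hww1⟩ := Submodule.mem_sup.1 ht2m
  rw [hspan0] at ht1m
  obtain ⟨cw, rfl⟩ := Submodule.mem_span_singleton.1 ht1m
  have hww : w * w = cw • a0 + nw + mw := by rw [← hww0, ← hww1]
  -- eigenvalue equations for the products
  have h0nv : a0 * nv = 0 := by have := (heig a0 nv 0).1 hnv; rwa [zero_smul] at this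
  have h0nw : a0 * nw = 0 := by have := (heig a0 nw 0).1 hnw; rwa [zero_smul] at this
  have h0mw : a0 * mw = (1/4:k) • mw := (heig a0 mw (1/4)).1 hmw
  have h0uu : a0 * (u * u) = 0 := by
    have := (heig a0 (u*u) 0).1 (f00 u hu u hu); rwa [zero_smul] at this
  have h0uv : a0 * (u * v) = (1/4:k) • (u * v) := (heig a0 (u*v) (1/4)).1 (f02 u hu v hv)
  have h0uw : a0 * (u * w) = (1/32:k) • (u * w) := (heig a0 (u*w) (1/32)).1 (f05 u hu w hw)
  have h0vw : a0 * (v * w) = (1/32:k) • (v * w) := (heig a0 (v*w) (1/32)).1 (f25 v hv w hw)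
  -- commuted versions
  have hu0 : u * a0 = 0 := (mul_comm u a0).trans h0u
  have hv0 : v * a0 = (1/4:k) • v := (mul_comm v a0).trans h0v
  have hw0 : w * a0 = (1/32:k) • w := (mul_comm w a0).trans h0w
  have hvu : v * u = u * v := mul_comm v u
  have hwu : w * u = u * w := mul_comm w u
  have hwv : w * v = v * w := mul_comm w v
  -- more orthogonality
  have hBuu : B a0 (u*u) = 0 := horth _ 0 (by rw [h0uu, zero_smul]) (by norm_num)
  have hBuv : B a0 (u*v) = 0 := horth _ (1/4) h0uv (by norm_num)
  have hBuw : B a0 (u*w) = 0 := horth _ (1/32) h0uw (by norm_num)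
  have hBvw : B a0 (v*w) = 0 := horth _ (1/32) h0vw (by norm_num)
  have hBnv : B a0 nv = 0 := horth _ 0 (by rw [h0nv, zero_smul]) (by norm_num)
  have hBnw : B a0 nw = 0 := horth _ 0 (by rw [h0nw, zero_smul]) (by norm_num)
  have hBmw : B a0 mw = 0 := horth _ (1/4) h0mw (by norm_num)
  -- the expansion of a1 * a1 = a1
  have T0 : lm • a0 + u + v + w = ((1:k)*cw + (1:k)*cv + (1:k)*lm*lm) • a0 + ((1/2:k)*lm) • v + ((1/16:k)*lm) • w + ((1:k)) • (u*u) + ((2:k)) • (u*v) + ((2:k)) • (u*w) + ((2:k)) • (v*w) + ((1:k)) • nv + ((1:k)) • nw + ((1:k)) • mw := by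
    have h : a1 * a1 = ((1:k)*cw + (1:k)*cv + (1:k)*lm*lm) • a0 + ((1/2:k)*lm) • v + ((1/16:k)*lm) • w + ((1:k)) • (u*u) + ((2:k)) • (u*v) + ((2:k)) • (u*w) + ((2:k)) • (v*w) + ((1:k)) • nv + ((1:k)) • nw + ((1:k)) • mw := by
      rw [ha1c]
      simp only [mul_add, add_mul, smul_mul_assoc, mul_smul_comm, smul_add, smul_zero, add_zero, zero_add, mul_zero, zero_mul, hid0, h0u, h0v, h0w, hu0, hv0, hw0, hvu, hwu, hwv, hvv, hww, h0uu, h0uv, h0uw, h0vw, h0nv, h0nw, h0mw]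
      module
    rw [← ha1c]
    rw [← h, hid1]
  have T1 : ((1:k)*lm) • a0 + ((1/4:k)) • v + ((1/32:k)) • w = ((1:k)*cw + (1:k)*cv + (1:k)*lm*lm) • a0 + ((1/8:k)*lm) • v + ((1/512:k)*lm) • w + ((1/2:k)) • (u*v) + ((1/16:k)) • (u*w) + ((1/16:k)) • (v*w) + ((1/4:k)) • mw := by
    have h := congrArg (fun z : A => a0 * z) T0
    simp only [mul_add, add_mul, smul_mul_assoc, mul_smul_comm, smul_add, smul_zero, add_zero, zero_add, mul_zero, zero_mul, hid0, h0u, h0v, h0w, hu0, hv0, hw0, hvu, hwu, hwv, hvv, hww, h0uu, h0uv, h0uw, h0vw, h0nv, h0nw, h0mw] at h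
    linear_combination (norm := module) h
  have T2 : ((1:k)*lm) • a0 + ((1/16:k)) • v + ((1/1024:k)) • w = ((1:k)*cw + (1:k)*cv + (1:k)*lm*lm) • a0 + ((1/32:k)*lm) • v + ((1/16384:k)*lm) • w + ((1/8:k)) • (u*v) + ((1/512:k)) • (u*w) + ((1/512:k)) • (v*w) + ((1/16:k)) • mw := by
    have h := congrArg (fun z : A => a0 * z) T1
    simp only [mul_add, add_mul, smul_mul_assoc, mul_smul_comm, smul_add, smul_zero, add_zero, zero_add, mul_zero, zero_mul, hid0, h0u, h0v, h0w, hu0, hv0, hw0, hvu, hwu, hwv, hvv, hww, h0uu, h0uv, h0uw, h0vw, h0nv, h0nw, h0mw] at h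
    linear_combination (norm := module) h
  have T3 : ((1:k)*lm) • a0 + ((1/64:k)) • v + ((1/32768:k)) • w = ((1:k)*cw + (1:k)*cv + (1:k)*lm*lm) • a0 + ((1/128:k)*lm) • v + ((1/524288:k)*lm) • w + ((1/32:k)) • (u*v) + ((1/16384:k)) • (u*w) + ((1/16384:k)) • (v*w) + ((1/64:k)) • mw := by
    have h := congrArg (fun z : A => a0 * z) T2
    simp only [mul_add, add_mul, smul_mul_assoc, mul_smul_comm, smul_add, smul_zero, add_zero, zero_add, mul_zero, zero_mul, hid0, h0u, h0v, h0w, hu0, hv0, hw0, hvu, hwu, hwv, hvv, hww, h0uu, h0uv, h0uw, h0vw, h0nv, h0nw, h0mw] at h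
    linear_combination (norm := module) h
  -- the fusion relations, by Lagrange extraction of components
  have hvwS : v * w = ((1/2:k) + (-1/32:k)*lm) • w + ((-1:k)) • (u*w) := by
    linear_combination (norm := module) (-4096/217:k) • T1 + (20480/217:k) • T2 + (-16384/217:k) • T3
  have hmwS : mw = ((1:k) + (-1/2:k)*lm) • v + ((-2:k)) • (u*v) := by
    linear_combination (norm := module) (16/21:k) • T1 + (-176/7:k) • T2 + (512/21:k) • T3
  have hnwS : nw = u + ((-1:k)) • (u*u) + ((-1:k)) • nv := by
    linear_combination (norm := module) (-1:k) • T0 + (37:k) • T1 + (-164:k) • T2 + (128:k) • T3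
  have hR4 : lm = cw + cv + lm*lm := by
    have h := congrArg (fun z : A => B a0 z) T0
    simp only [map_add, map_smul, hBu, hBv, hBw, hBuu, hBuv, hBuw, hBvw, hBnv, hBnw, hBmw,
      hn0, smul_eq_mul, mul_one, mul_zero, add_zero] at h
    linear_combination h
  -- decompose a0 with respect to a1
  have hmem' : a0 ∈ eig k a1 1 ⊔ eig k a1 0 ⊔ eig k a1 (1/4) ⊔ eig k a1 (1/32) := by
    rw [hsup1]; exact Submodule.mem_top
  obtain ⟨p3', hp3m', w', hw', hs3'⟩ := Submodule.mem_sup.1 hmem'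
  obtain ⟨q2', hq2m', v', hv', hs2'⟩ := Submodule.mem_sup.1 hp3m'
  obtain ⟨y1', hy1', u', hu', hs1'⟩ := Submodule.mem_sup.1 hq2m'
  rw [hspan1] at hy1'
  obtain ⟨c', rfl⟩ := Submodule.mem_span_singleton.1 hy1'
  have h1u' : a1 * u' = 0 := by have := (heig a1 u' 0).1 hu'; rwa [zero_smul] at this
  have h1v' : a1 * v' = (1/4:k) • v' := (heig a1 v' (1/4)).1 hv'
  have h1w' : a1 * w' = (1/32:k) • w' := (heig a1 w' (1/32)).1 hw'
  have horth1 : ∀ (x : A) (ν : k), a1 * x = ν • x → ν ≠ 1 → B a1 x = 0 := by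
    intro x ν hx hν
    have h1 : B (a1 * a1) x = B a1 (a1 * x) := hassoc a1 a1 x
    rw [hid1, hx, map_smul, smul_eq_mul] at h1
    have h2 : (1 - ν) * B a1 x = 0 := by linear_combination h1
    rcases mul_eq_zero.1 h2 with h | h
    · exact absurd (by linear_combination h) hν.symm
    · exact h
  have hceq' : lm = c' := by
    have h : B a1 (c' • a1 + u' + v' + w') = B a1 a0 := by rw [hs1', hs2', hs3']
    simp only [map_add, map_smul, horth1 u' 0 (by rw [h1u', zero_smul]) (by norm_num),
      horth1 v' (1/4) h1v' (by norm_num), horth1 w' (1/32) h1w' (by norm_num),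
      hn1, smul_eq_mul, mul_one, add_zero] at h
    rw [hlm, hsymm a0 a1, h]
  subst hceq'
  have ha0c : a0 = lm • a1 + u' + v' + w' := by rw [hs1', hs2', hs3']
  -- adjoint action of a1 on a0
  have eq1' : a1 * a0 = lm • a1 + (1/4:k) • v' + (1/32:k) • w' := by
    conv_lhs => rw [ha0c]
    simp only [mul_add, mul_smul_comm, hid1, h1u', h1v', h1w', add_zero, smul_zero]
  have eq2' : a1 * (a1 * a0) = lm • a1 + (1/16:k) • v' + (1/1024:k) • w' := by
    rw [eq1']
    simp only [mul_add, mul_smul_comm, hid1, h1u', h1v', h1w', add_zero, smul_zero]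
    module
  have hwdet : w' = (256/7:k) • (a1 * a0) + (-1024/7:k) • (a1 * (a1 * a0)) + ((768/7:k)*lm) • a1 := by
    linear_combination (norm := module) (-256/7:k) • eq1' + (1024/7:k) • eq2'
  -- products in the a0-frame
  have hp1 : a1 * a0 = ((1:k)*lm) • a0 + ((1/4:k)) • v + ((1/32:k)) • w := by
    rw [mul_comm a1 a0]
    nth_rewrite 1 [ha1c]
    simp only [mul_add, add_mul, smul_mul_assoc, mul_smul_comm, smul_add, smul_zero, add_zero, zero_add, mul_zero, zero_mul, hid0, h0u, h0v, h0w, hu0, hv0, hw0, hvu, hwu, hwv, hvv, hww, h0uu, h0uv, h0uw, h0vw, h0nv, h0nw, h0mw]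
    module
  have hp2 : a1 * (a1 * a0) = ((1/32:k)*cw + (1/4:k)*cv + (1:k)*lm*lm) • a0 + ((5/16:k)*lm) • v + ((33/1024:k)*lm) • w + ((1/4:k)) • (u*v) + ((1/32:k)) • (u*w) + ((9/32:k)) • (v*w) + ((1/4:k)) • nv + ((1/32:k)) • nw + ((1/32:k)) • mw := by
    rw [hp1]
    nth_rewrite 1 [ha1c]
    simp only [mul_add, add_mul, smul_mul_assoc, mul_smul_comm, smul_add, smul_zero, add_zero, zero_add, mul_zero, zero_mul, hid0, h0u, h0v, h0w, hu0, hv0, hw0, hvu, hwu, hwv, hvv, hww, h0uu, h0uv, h0uw, h0vw, h0nv, h0nw, h0mw]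
    module
  have hwPc : w' = ((-32/7:k)*cw + (-256/7:k)*cv + (256/7:k)*lm + (-256/7:k)*lm*lm) • a0 + ((768/7:k)*lm) • u + ((64/7:k) + (64:k)*lm) • v + ((8/7:k) + (105:k)*lm) • w + ((-256/7:k)) • (u*v) + ((-32/7:k)) • (u*w) + ((-288/7:k)) • (v*w) + ((-256/7:k)) • nv + ((-32/7:k)) • nw + ((-32/7:k)) • mw := by
    rw [hwdet, hp2, hp1, ha1c]
    module
  -- indexing lemmas
  have ha1i : a 1 = a1 := by
    rw [ha]; unfold aSeq
    rw [if_neg (by decide : ¬ Even (1:ℤ)), (by decide : ((1:ℤ) - 1)/2 = 0), zpow_zero]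
    rfl
  have ha2g : a 2 = τ1 (τ0 a0) := by
    rw [ha]; unfold aSeq
    rw [if_pos (by decide : Even (2:ℤ)), (by decide : ((2:ℤ))/2 = 1), zpow_one]
    rfl
  have ham1g : a (-1) = τ0.symm (τ1.symm a1) := by
    rw [ha]; unfold aSeq
    rw [if_neg (by decide : ¬ Even (-1:ℤ)), (by decide : ((-1:ℤ) - 1)/2 = -1), zpow_neg_one]
    rfl
  have ham2g : a (-2) = τ0.symm (τ1.symm a0) := by
    rw [ha]; unfold aSeq
    rw [if_pos (by decide : Even (-2:ℤ)), (by decide : ((-2:ℤ))/2 = -1), zpow_neg_one]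
    rfl
  -- action of the Miyamoto involutions on the pieces
  have m1 : ∀ x : A, a0 * x = x → x ∈ eig k a0 1 ⊔ eig k a0 0 ⊔ eig k a0 (1/4) :=
    fun x hx => Submodule.mem_sup_left (Submodule.mem_sup_left
      ((heig a0 x 1).2 (by rw [hx, one_smul])))
  have m0 : ∀ x : A, x ∈ eig k a0 0 → x ∈ eig k a0 1 ⊔ eig k a0 0 ⊔ eig k a0 (1/4) :=
    fun x hx => Submodule.mem_sup_left (Submodule.mem_sup_right hx)
  have m2 : ∀ x : A, x ∈ eig k a0 (1/4) → x ∈ eig k a0 1 ⊔ eig k a0 0 ⊔ eig k a0 (1/4) :=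
    fun x hx => Submodule.mem_sup_right hx
  have ht0a0 : τ0 a0 = a0 := hτ0p a0 (m1 a0 hid0)
  have ht0u : τ0 u = u := hτ0p u (m0 u hu)
  have ht0v : τ0 v = v := hτ0p v (m2 v hv)
  have ht0w : τ0 w = -w := hτ0m w hw
  have ht0uu : τ0 (u*u) = u*u := hτ0p _ (m0 _ (f00 u hu u hu))
  have ht0uv : τ0 (u*v) = u*v := hτ0p _ (m2 _ (f02 u hu v hv))
  have ht0uw : τ0 (u*w) = -(u*w) := hτ0m _ (f05 u hu w hw)
  have ht0vw : τ0 (v*w) = -(v*w) := hτ0m _ (f25 v hv w hw)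
  have ht0nv : τ0 nv = nv := hτ0p nv (m0 nv hnv)
  have ht0nw : τ0 nw = nw := hτ0p nw (m0 nw hnw)
  have ht0mw : τ0 mw = mw := hτ0p mw (m2 mw hmw)
  have ht1a1 : τ1 a1 = a1 := hτ1p a1 (Submodule.mem_sup_left (Submodule.mem_sup_left
      ((heig a1 a1 1).2 (by rw [hid1, one_smul]))))
  have ht1u' : τ1 u' = u' := hτ1p u' (Submodule.mem_sup_left (Submodule.mem_sup_right hu'))
  have ht1v' : τ1 v' = v' := hτ1p v' (Submodule.mem_sup_right hv')
  have ht1w' : τ1 w' = -w' := hτ1m w' hw'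
  -- the element a 2
  have ha2E : a 2 = lm • a1 + u' + v' - w' := by
    rw [ha2g, ht0a0]
    nth_rewrite 1 [ha0c]
    rw [map_add, map_add, map_add, map_smul, ht1a1, ht1u', ht1v', ht1w']
    module
  have ha2c : a 2 = ((1:k) + (64/7:k)*cw + (512/7:k)*cv + (-512/7:k)*lm + (512/7:k)*lm*lm) • a0 + ((-1536/7:k)*lm) • u + ((-128/7:k) + (-128:k)*lm) • v + ((-16/7:k) + (-210:k)*lm) • w + ((512/7:k)) • (u*v) + ((64/7:k)) • (u*w) + ((576/7:k)) • (v*w) + ((512/7:k)) • nv + ((64/7:k)) • nw + ((64/7:k)) • mw := by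
    linear_combination (norm := module) ha2E - ha0c - (2:k) • hwPc
  -- scalar relations
  have hmuEq : mu = (1:k) + (64/7:k)*cw + (512/7:k)*cv + (-512/7:k)*lm + (512/7:k)*lm*lm := by
    have hb2 := congrArg (fun z : A => B a0 z) ha2c
    simp only [map_add, map_smul, hBu, hBv, hBw, hBuu, hBuv, hBuw, hBvw, hBnv, hBnw, hBmw,
      hn0, smul_eq_mul, mul_one, mul_zero, add_zero] at hb2
    linear_combination hmu + hb2
  have hcw2 : cw = (1/64:k) - (1/64:k)*mu := by
    linear_combination (1/64:k)*hmuEq - (8/7:k)*hR4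
  have hcv2 : cv = lm - lm*lm - cw := by linear_combination (-1:k) * hR4
  -- the elements a (-1) and a (-2)
  have ham1c : a (-1) = lm • a0 + u + v + (-1:k) • w := by
    rw [ham1g, (LinearEquiv.symm_apply_eq τ1).2 ht1a1.symm]
    refine (LinearEquiv.symm_apply_eq τ0).2 ?_
    simp only [map_add, map_smul, ht0a0, ht0u, ht0v, ht0w]
    rw [ha1c]
    module
  have ham2c : a (-2) = ((1:k) + (64/7:k)*cw + (512/7:k)*cv + (-512/7:k)*lm + (512/7:k)*lm*lm) • a0 + ((-1536/7:k)*lm) • u + ((-128/7:k) + (-128:k)*lm) • v + ((16/7:k) + (210:k)*lm) • w + ((512/7:k)) • (u*v) + ((-64/7:k)) • (u*w) + ((-576/7:k)) • (v*w) + ((512/7:k)) • nv + ((64/7:k)) • nw + ((64/7:k)) • mw := by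
    have hs1t : τ1.symm a0 = a 2 := by
      refine (LinearEquiv.symm_apply_eq τ1).2 ?_
      rw [ha2E]
      simp only [map_sub, map_add, map_smul, ht1a1, ht1u', ht1v', ht1w']
      rw [ha0c]
      module
    rw [ham2g, hs1t]
    refine (LinearEquiv.symm_apply_eq τ0).2 ?_
    simp only [map_add, map_smul, ht0a0, ht0u, ht0v, ht0w, ht0uu, ht0uv, ht0uw, ht0vw,
      ht0nv, ht0nw, ht0mw]
    rw [ha2c]
    module
  -- coordinates of the sigmas
  have hsig1c : σ1 = ((-1/32:k) + (31/32:k)*lm) • a0 + ((-1/32:k)) • u + ((7/32:k)) • v := by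
    rw [hσ1, ha1c]
    simp only [mul_add, add_mul, smul_mul_assoc, mul_smul_comm, smul_add, smul_zero, add_zero, zero_add, mul_zero, zero_mul, hid0, h0u, h0v, h0w, hu0, hv0, hw0, hvu, hwu, hwv, hvv, hww, h0uu, h0uv, h0uw, h0vw, h0nv, h0nw, h0mw]
    module
  have hsig2ec : σ2e = ((15/16:k) + (62/7:k)*cw + (496/7:k)*cv + (-496/7:k)*lm + (496/7:k)*lm*lm) • a0 + ((48/7:k)*lm) • u + ((-4:k) + (-28:k)*lm) • v + ((16:k)) • (u*v) + ((-16/7:k)) • nv + ((-2/7:k)) • nw + ((2:k)) • mw := by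
    rw [hσ2e, ha2c]
    simp only [mul_add, add_mul, smul_mul_assoc, mul_smul_comm, smul_add, smul_zero, add_zero, zero_add, mul_zero, zero_mul, hid0, h0u, h0v, h0w, hu0, hv0, hw0, hvu, hwu, hwv, hvv, hww, h0uu, h0uv, h0uw, h0vw, h0nv, h0nw, h0mw]
    module
  have hsig2oc : σ2o = ((-1:k)*cw + (1:k)*cv + (-1/16:k)*lm + (1:k)*lm*lm) • a0 + ((-1/16:k)) • u + ((-1/16:k) + (1/2:k)*lm) • v + ((1:k)) • (u*u) + ((2:k)) • (u*v) + ((1:k)) • nv + ((-1:k)) • nw + ((-1:k)) • mw := by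
    rw [hσ2o, ham1c, ha1c]
    simp only [mul_add, add_mul, smul_mul_assoc, mul_smul_comm, smul_add, smul_zero, add_zero, zero_add, mul_zero, zero_mul, hid0, h0u, h0v, h0w, hu0, hv0, hw0, hvu, hwu, hwv, hvv, hww, h0uu, h0uv, h0uw, h0vw, h0nv, h0nw, h0mw]
    module
  have hLHSc : a0 * σ2o = ((-1:k)*cw + (1:k)*cv + (-1/16:k)*lm + (1:k)*lm*lm) • a0 + ((-1/64:k) + (1/8:k)*lm) • v + ((1/2:k)) • (u*v) + ((-1/4:k)) • mw := by
    rw [hsig2oc]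
    simp only [mul_add, add_mul, smul_mul_assoc, mul_smul_comm, smul_add, smul_zero, add_zero, zero_add, mul_zero, zero_mul, hid0, h0u, h0v, h0w, hu0, hv0, hw0, hvu, hwu, hwv, hvv, hww, h0uu, h0uv, h0uw, h0vw, h0nv, h0nw, h0mw]
    module
  -- the final identity
  rw [hLHSc, hsig1c, hsig2ec, ha1i, ha1c, ham1c, ha2c, ham2c]
  rw [hvwS, hmwS, hnwS, hcv2, hcw2]
  match_scalars <;> ring
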